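/- For all real numbers c, x with 0 < c < 1/4 and 0 < x ≤ c/(9·log²(9/c)), one has x·log²(1/x) ≤ c. -/
import Mathlib

lemma key_mono (u v : ℝ) (hv : 2 ≤ v) (huv : v ≤ u) :
    u ^ 2 * Real.exp (-u) ≤ v ^ 2 * Real.exp (-v) := by
  have h1 : u ≤ v * Real.exp ((u - v) / 2) := by
    nlinarith [Real.add_one_le_exp ((u - v) / 2), Real.exp_pos ((u - v) / 2)]
  have h2 : u ^ 2 ≤ v ^ 2 * Real.exp (u - v) := by
    have hsq : Real.exp ((u - v) / 2) ^ 2 = Real.exp (u - v) := by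
      rw [← Real.exp_nat_mul]; push_cast; ring_nf
    nlinarith [Real.exp_pos ((u - v) / 2), sq_nonneg u]
  have h3 : Real.exp (u - v) * Real.exp (-u) = Real.exp (-v) := by
    rw [← Real.exp_add]; ring_nf
  nlinarith [Real.exp_pos (-u), h2]

theorem x_log_sq_le (c x : ℝ) (hc0 : 0 < c) (hc1 : c < 1 / 4) (hx0 : 0 < x)
    (hx : x ≤ c / (9 * Real.log (9 / c) ^ 2)) :
    x * Real.log (1 / x) ^ 2 ≤ c := by
  set L := Real.log (9 / c) with hLdef
  have h9c : (36 : ℝ) ≤ 9 / c := by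
    rw [le_div_iff₀ hc0]; linarith
  have hexp2 : Real.exp 2 ≤ 9 / c := by
    have h : Real.exp 2 ≤ 36 := by
      have h1 := Real.exp_one_lt_d9
      have : Real.exp 2 = Real.exp 1 ^ 2 := by
        rw [← Real.exp_nat_mul]; norm_num
      nlinarith [Real.exp_pos 1]
    linarith
  have hL2 : 2 ≤ L := by
    calc (2 : ℝ) = Real.log (Real.exp 2) := (Real.log_exp 2).symm
      _ ≤ L := Real.log_le_log (Real.exp_pos 2) hexp2
  have hL0 : 0 < L := by linarith
  have hlogL : 0 ≤ Real.log L := Real.log_nonneg (by linarith)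
  have hlogLle : Real.log L ≤ L := (Real.log_le_sub_one_of_pos hL0).trans (by linarith)
  set v := L + 2 * Real.log L with hvdef
  have hv2 : 2 ≤ v := by linarith
  have ht0pos : 0 < 9 * L ^ 2 / c := by positivity
  have hvlog : v = Real.log (9 * L ^ 2 / c) := by
    rw [Real.log_div (by positivity) hc0.ne', Real.log_mul (by norm_num) (by positivity),
      Real.log_pow, hvdef, hLdef, Real.log_div (by norm_num) hc0.ne']
    push_cast; ring
  have hexpnv : Real.exp (-v) = c / (9 * L ^ 2) := by
    rw [Real.exp_neg, hvlog, Real.exp_log ht0pos]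
    field_simp
  set u := Real.log (1 / x) with hudef
  have hxt0 : x ≤ c / (9 * L ^ 2) := hx
  have huv : v ≤ u := by
    rw [hvlog, hudef]
    apply Real.log_le_log ht0pos
    have h' : x * (9 * L ^ 2) ≤ c := (le_div_iff₀ (by positivity)).mp hxt0
    rw [div_le_div_iff₀ hc0 hx0]
    nlinarith
  have hexpnu : Real.exp (-u) = x := by
    rw [Real.exp_neg, hudef, Real.exp_log (by positivity : (0:ℝ) < 1 / x), one_div, inv_inv]
  have hkey := key_mono u v hv2 huv
  rw [hexpnu, hexpnv] at hkey
  have hv3L : v ≤ 3 * L := by linarith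
  have hv0 : 0 ≤ v := by linarith
  calc x * u ^ 2 = u ^ 2 * x := by ring
    _ ≤ v ^ 2 * (c / (9 * L ^ 2)) := hkey
    _ ≤ (3 * L) ^ 2 * (c / (9 * L ^ 2)) := by
        apply mul_le_mul_of_nonneg_right _ (by positivity)
        nlinarith
    _ = c := by field_simp; ring
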